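/- For every integer n ≥ 0, every real θ, and all real numbers x, y, the probabilist's Hermite polynomials satisfy the rotational invariance H_n(x cos θ + y sin θ) = Σ_{j=0}^{n} C(n,j) (cos θ)^j (sin θ)^{n−j} H_j(x) H_{n−j}(y). -/
import Mathlib

/-- The probabilist's Hermite polynomial `H_n` evaluated at `x : ℝ`. -/
noncomputable def hermiteEval (n : ℕ) (x : ℝ) : ℝ :=
  Polynomial.aeval x (Polynomial.hermite n)

lemma derivative_hermite_aux (n : ℕ) :
    Polynomial.derivative (Polynomial.hermite (n + 1)) =
      Polynomial.C ((n : ℤ) + 1) * Polynomial.hermite n := by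
  induction n with
  | zero => simp [Polynomial.hermite_one, Polynomial.hermite_zero]
  | succ n ih =>
    rw [Polynomial.hermite_succ (n + 1), Polynomial.derivative_sub,
      Polynomial.derivative_mul, Polynomial.derivative_X, ih,
      Polynomial.derivative_C_mul, Polynomial.hermite_succ n]
    push_cast
    simp only [map_add, map_one, map_ofNat]
    ring

lemma hermiteEval_zero (x : ℝ) : hermiteEval 0 x = 1 := by
  simp [hermiteEval, Polynomial.hermite_zero]

lemma hermiteEval_one (x : ℝ) : hermiteEval 1 x = x := by
  simp [hermiteEval, Polynomial.hermite_one]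

lemma hermiteEval_rec (j : ℕ) (x : ℝ) :
    hermiteEval (j + 1) x = x * hermiteEval j x - j * hermiteEval (j - 1) x := by
  cases j with
  | zero => simp [hermiteEval_zero, hermiteEval_one]
  | succ k =>
    simp only [hermiteEval, Polynomial.hermite_succ (k + 1), map_sub, map_mul,
      Polynomial.aeval_X, derivative_hermite_aux k, Polynomial.aeval_C]
    push_cast
    ring

lemma key (a b x y : ℝ) (hab : a ^ 2 + b ^ 2 = 1) : ∀ n : ℕ,
    hermiteEval n (x * a + y * b) =
      ∑ j ∈ Finset.range (n + 1),
        (n.choose j : ℝ) * a ^ j * b ^ (n - j) * hermiteEval j x * hermiteEval (n - j) y := by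
  intro n
  induction n using Nat.twoStepInduction with
  | zero => simp [hermiteEval_zero]
  | one =>
    rw [Finset.sum_range_succ, Finset.sum_range_succ, Finset.sum_range_zero]
    simp [hermiteEval_zero, hermiteEval_one]
    ring
  | more n ih ih1 =>
    have hrec := hermiteEval_rec
    have hL : hermiteEval (n + 2) (x * a + y * b)
        = (x * a + y * b) * (∑ j ∈ Finset.range (n + 2),
            ((n+1).choose j : ℝ) * a ^ j * b ^ (n+1-j) * hermiteEval j x * hermiteEval (n+1-j) y)
          - ((n : ℝ) + 1) * (∑ j ∈ Finset.range (n + 1),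
            (n.choose j : ℝ) * a ^ j * b ^ (n-j) * hermiteEval j x * hermiteEval (n-j) y) := by
      have := hrec (n + 1) (x * a + y * b)
      simp only [Nat.add_sub_cancel] at this
      rw [this, ih1, ih]
      push_cast
      ring
    rw [hL]
    have hA1 : (x * a + y * b) * (∑ j ∈ Finset.range (n + 2),
          ((n+1).choose j : ℝ) * a ^ j * b ^ (n+1-j) * hermiteEval j x * hermiteEval (n+1-j) y) =
        (∑ j ∈ Finset.range (n + 2),
          ((n+1).choose j : ℝ) * a ^ (j+1) * b ^ (n+1-j) * hermiteEval (j+1) x * hermiteEval (n+1-j) y)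
      + (∑ j ∈ Finset.range (n + 2),
          ((n+1).choose j : ℝ) * j * a ^ (j+1) * b ^ (n+1-j) * hermiteEval (j-1) x * hermiteEval (n+1-j) y)
      + (∑ j ∈ Finset.range (n + 2),
          ((n+1).choose j : ℝ) * a ^ j * b ^ (n+2-j) * hermiteEval j x * hermiteEval (n+2-j) y)
      + (∑ j ∈ Finset.range (n + 2),
          ((n+1).choose j : ℝ) * ((n+1-j : ℕ) : ℝ) * a ^ j * b ^ (n+2-j) * hermiteEval j x * hermiteEval (n-j) y) := by
      rw [Finset.mul_sum]
      rw [← Finset.sum_add_distrib, ← Finset.sum_add_distrib, ← Finset.sum_add_distrib]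
      apply Finset.sum_congr rfl
      intro j hj
      rw [Finset.mem_range] at hj
      have hx : x * hermiteEval j x = hermiteEval (j + 1) x + j * hermiteEval (j - 1) x := by
        rw [hrec j x]; ring
      have hy : y * hermiteEval (n + 1 - j) y
          = hermiteEval (n + 2 - j) y + ((n + 1 - j : ℕ) : ℝ) * hermiteEval (n - j) y := by
        have h1 : n + 2 - j = (n + 1 - j) + 1 := by omega
        have h2 : n - j = (n + 1 - j) - 1 := by omega
        rw [h1, h2, hrec (n + 1 - j) y]; ring
      have h3 : b ^ (n + 2 - j) = b ^ (n + 1 - j) * b := by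
        rw [← pow_succ]; congr 1; omega
      calc (x * a + y * b) * (((n+1).choose j : ℝ) * a ^ j * b ^ (n+1-j) * hermiteEval j x * hermiteEval (n+1-j) y)
          = ((n+1).choose j : ℝ) * a ^ (j+1) * b ^ (n+1-j) * (x * hermiteEval j x) * hermiteEval (n+1-j) y
            + ((n+1).choose j : ℝ) * a ^ j * (b ^ (n+1-j) * b) * hermiteEval j x * (y * hermiteEval (n+1-j) y) := by
            ring
        _ = _ := by rw [hx, hy, h3]; ring
    have hA2 : (∑ j ∈ Finset.range (n + 2),
          ((n+1).choose j : ℝ) * j * a ^ (j+1) * b ^ (n+1-j) * hermiteEval (j-1) x * hermiteEval (n+1-j) y)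
        = ((n : ℝ) + 1) * a ^ 2 * (∑ j ∈ Finset.range (n + 1),
            (n.choose j : ℝ) * a ^ j * b ^ (n-j) * hermiteEval j x * hermiteEval (n-j) y) := by
      rw [Finset.sum_range_succ']
      simp only [Nat.cast_zero, mul_zero, zero_mul, add_zero]
      rw [Finset.mul_sum]
      apply Finset.sum_congr rfl
      intro k hk
      rw [Finset.mem_range] at hk
      have hc : ((n+1).choose (k+1) : ℝ) * ((k : ℝ) + 1) = ((n : ℝ) + 1) * (n.choose k : ℝ) := by
        have := Nat.add_one_mul_choose_eq n k
        have := congrArg (fun t : ℕ => (t : ℝ)) this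
        push_cast at this
        linarith [this]
      have h1 : n + 1 - (k + 1) = n - k := by omega
      have h2 : k + 1 - 1 = k := rfl
      rw [h1, h2]
      push_cast
      calc ((n+1).choose (k+1) : ℝ) * ((k:ℝ)+1) * a ^ (k+1+1) * b ^ (n-k) * hermiteEval k x * hermiteEval (n-k) y
          = (((n+1).choose (k+1) : ℝ) * ((k:ℝ)+1)) * (a ^ (k+2) * b ^ (n-k) * hermiteEval k x * hermiteEval (n-k) y) := by
            ring
        _ = _ := by rw [hc]; ring
    have hA4 : (∑ j ∈ Finset.range (n + 2),
          ((n+1).choose j : ℝ) * ((n+1-j : ℕ) : ℝ) * a ^ j * b ^ (n+2-j) * hermiteEval j x * hermiteEval (n-j) y)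
        = ((n : ℝ) + 1) * b ^ 2 * (∑ j ∈ Finset.range (n + 1),
            (n.choose j : ℝ) * a ^ j * b ^ (n-j) * hermiteEval j x * hermiteEval (n-j) y) := by
      rw [Finset.sum_range_succ]
      simp only [Nat.add_sub_cancel, Nat.sub_self, Nat.cast_zero, mul_zero, zero_mul, add_zero]
      rw [Finset.mul_sum]
      apply Finset.sum_congr rfl
      intro j hj
      rw [Finset.mem_range] at hj
      have hc : ((n+1).choose j : ℝ) * ((n+1-j : ℕ) : ℝ) = ((n : ℝ) + 1) * (n.choose j : ℝ) := by
        have := Nat.choose_mul_succ_eq n j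
        have := congrArg (fun t : ℕ => (t : ℝ)) this
        push_cast at this
        linarith [this]
      have h1 : n + 2 - j = (n - j) + 2 := by omega
      rw [h1]
      calc ((n+1).choose j : ℝ) * ((n+1-j : ℕ) : ℝ) * a ^ j * b ^ ((n-j)+2) * hermiteEval j x * hermiteEval (n-j) y
          = (((n+1).choose j : ℝ) * ((n+1-j : ℕ) : ℝ)) * (a ^ j * b ^ ((n-j)+2) * hermiteEval j x * hermiteEval (n-j) y) := by
            ring
        _ = _ := by rw [hc]; ring
    have hA13 : (∑ j ∈ Finset.range (n + 2),
          ((n+1).choose j : ℝ) * a ^ (j+1) * b ^ (n+1-j) * hermiteEval (j+1) x * hermiteEval (n+1-j) y)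
      + (∑ j ∈ Finset.range (n + 2),
          ((n+1).choose j : ℝ) * a ^ j * b ^ (n+2-j) * hermiteEval j x * hermiteEval (n+2-j) y)
        = ∑ j ∈ Finset.range (n + 3),
          ((n+2).choose j : ℝ) * a ^ j * b ^ (n+2-j) * hermiteEval j x * hermiteEval (n+2-j) y := by
      have hR : (∑ j ∈ Finset.range (n + 3),
            ((n+2).choose j : ℝ) * a ^ j * b ^ (n+2-j) * hermiteEval j x * hermiteEval (n+2-j) y)
          = (∑ k ∈ Finset.range (n + 2),
              ((n+2).choose (k+1) : ℝ) * a ^ (k+1) * b ^ (n+1-k) * hermiteEval (k+1) x * hermiteEval (n+1-k) y)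
            + b ^ (n+2) * hermiteEval 0 x * hermiteEval (n+2) y := by
        rw [Finset.sum_range_succ']
        congr 1
        · apply Finset.sum_congr rfl
          intro k hk
          rw [Finset.mem_range] at hk
          have h1 : n + 2 - (k + 1) = n + 1 - k := by omega
          rw [h1]
        · simp
      have hsplit : ∀ k ∈ Finset.range (n + 2),
          ((n+2).choose (k+1) : ℝ) * a ^ (k+1) * b ^ (n+1-k) * hermiteEval (k+1) x * hermiteEval (n+1-k) y
          = ((n+1).choose k : ℝ) * a ^ (k+1) * b ^ (n+1-k) * hermiteEval (k+1) x * hermiteEval (n+1-k) y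
            + ((n+1).choose (k+1) : ℝ) * a ^ (k+1) * b ^ (n+1-k) * hermiteEval (k+1) x * hermiteEval (n+1-k) y := by
        intro k hk
        have hp : ((n+2).choose (k+1) : ℝ) = ((n+1).choose k : ℝ) + ((n+1).choose (k+1) : ℝ) := by
          exact_mod_cast congrArg (fun t : ℕ => (t : ℝ)) (Nat.choose_succ_succ' (n+1) k)
        rw [hp]; ring
      have hG : (∑ k ∈ Finset.range (n + 2),
            ((n+1).choose (k+1) : ℝ) * a ^ (k+1) * b ^ (n+1-k) * hermiteEval (k+1) x * hermiteEval (n+1-k) y)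
          = ∑ k ∈ Finset.range (n + 1),
            ((n+1).choose (k+1) : ℝ) * a ^ (k+1) * b ^ (n+1-k) * hermiteEval (k+1) x * hermiteEval (n+1-k) y := by
        rw [Finset.sum_range_succ]
        simp [Nat.choose_succ_self]
      have hA3 : (∑ j ∈ Finset.range (n + 2),
            ((n+1).choose j : ℝ) * a ^ j * b ^ (n+2-j) * hermiteEval j x * hermiteEval (n+2-j) y)
          = (∑ k ∈ Finset.range (n + 1),
              ((n+1).choose (k+1) : ℝ) * a ^ (k+1) * b ^ (n+1-k) * hermiteEval (k+1) x * hermiteEval (n+1-k) y)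
            + b ^ (n+2) * hermiteEval 0 x * hermiteEval (n+2) y := by
        rw [Finset.sum_range_succ']
        congr 1
        · apply Finset.sum_congr rfl
          intro k hk
          rw [Finset.mem_range] at hk
          have h1 : n + 2 - (k + 1) = n + 1 - k := by omega
          rw [h1]
        · simp
      rw [hR, Finset.sum_congr rfl hsplit, Finset.sum_add_distrib, hG, hA3]
      ring
    rw [hA1, hA2, hA4]
    rw [show n + 2 + 1 = n + 3 from rfl] at *
    linear_combination hA13 + ((n : ℝ) + 1) * (∑ j ∈ Finset.range (n + 1),
      (n.choose j : ℝ) * a ^ j * b ^ (n-j) * hermiteEval j x * hermiteEval (n-j) y) * hab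

/-- **Rotational invariance of Hermite polynomials.**
For every `n ≥ 0`, every real `θ`, and all real `x, y`,
`H_n(x cos θ + y sin θ) = Σ_{j=0}^{n} C(n,j) (cos θ)^j (sin θ)^{n−j} H_j(x) H_{n−j}(y)`. -/
theorem hermite_rotation_invariance (n : ℕ) (θ x y : ℝ) :
    hermiteEval n (x * Real.cos θ + y * Real.sin θ) =
      ∑ j ∈ Finset.range (n + 1),
        (n.choose j : ℝ) * (Real.cos θ) ^ j * (Real.sin θ) ^ (n - j) *
          hermiteEval j x * hermiteEval (n - j) y := by
  exact key (Real.cos θ) (Real.sin θ) x y (by rw [add_comm]; exact Real.sin_sq_add_cos_sq θ) n
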